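/- Suppose G is a (2,l)-sparse multigraph with a triangle T with boundary walk v₁,e₁,v₂,e₂,v₃,e₃,v₁ (v₁ ≠ v₂, e₁ ≠ e₂), and the contraction G_{T,e₁} = (G/e₁) - e₂ is not (2,l)-sparse. Then there exists a subgraph H of G containing e₁ but not containing v₃ with γ(H) = l. -/
import Mathlib


/-- A finite multigraph: each edge is incident to an unordered pair of vertices
(loops and parallel edges allowed). -/
structure MGraph (V E : Type) where
  inc : E → Sym2 V

namespace MGraph

variable {V E : Type} [DecidableEq V] [DecidableEq E]

/-- A subgraph of a multigraph: a set of vertices and a set of edges whose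
endpoints all lie in the vertex set. -/
structure Sub (G : MGraph V E) where
  verts : Finset V
  edges : Finset E
  compat : ∀ e ∈ edges, ∀ v ∈ G.inc e, v ∈ verts

variable {G : MGraph V E}

/-- γ(H) = 2|V(H)| - |E(H)|. -/
def Sub.gamma (H : G.Sub) : ℤ := 2 * H.verts.card - H.edges.card

def Sub.union (H K : G.Sub) : G.Sub where
  verts := H.verts ∪ K.verts
  edges := H.edges ∪ K.edges
  compat := by
    intro e he v hv
    rcases Finset.mem_union.1 he with h | h
    · exact Finset.mem_union.2 (Or.inl (H.compat e h v hv))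
    · exact Finset.mem_union.2 (Or.inr (K.compat e h v hv))

def Sub.inter (H K : G.Sub) : G.Sub where
  verts := H.verts ∩ K.verts
  edges := H.edges ∩ K.edges
  compat := by
    intro e he v hv
    rcases Finset.mem_inter.1 he with ⟨h1, h2⟩
    exact Finset.mem_inter.2 ⟨H.compat e h1 v hv, K.compat e h2 v hv⟩

/-- Subgraph containment. -/
def Sub.le (H K : G.Sub) : Prop := H.verts ⊆ K.verts ∧ H.edges ⊆ K.edges

/-- H is (2,l)-sparse: every nonempty subgraph K of H has γ(K) ≥ l. -/
def Sparse (l : ℤ) (H : G.Sub) : Prop :=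
  ∀ K : G.Sub, K.le H → K.verts.Nonempty → l ≤ K.gamma

/-- H is (2,l)-tight: (2,l)-sparse and γ(H) = l. -/
def Tight (l : ℤ) (H : G.Sub) : Prop := Sparse l H ∧ H.gamma = l

/-- The whole graph, as a subgraph of itself. -/
def top (G : MGraph V E) [Fintype V] [Fintype E] : G.Sub where
  verts := Finset.univ
  edges := Finset.univ
  compat := fun _ _ v _ => Finset.mem_univ v

/-- Adjacency within a subgraph. -/
def Sub.Adj (H : G.Sub) (u w : V) : Prop := ∃ e ∈ H.edges, G.inc e = s(u, w)

/-- A subgraph is connected if any two of its vertices are joined by a walk in it. -/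
def Sub.Connected (H : G.Sub) : Prop :=
  ∀ u ∈ H.verts, ∀ w ∈ H.verts, Relation.ReflTransGen H.Adj u w

/-- The graph obtained from `G` by identifying the vertex `b` with the vertex `a`
and deleting the two edges `f` and `g`. -/
def contractDel (G : MGraph V E) (a b : V) (hab : a ≠ b) (f g : E) :
    MGraph {v : V // v ≠ b} {e : E // e ≠ f ∧ e ≠ g} where
  inc e := (G.inc e.1).map fun v => if hv : v = b then ⟨a, hab⟩ else ⟨v, hv⟩

/-- Add a single new edge joining `u` and `v`. -/
def addEdge (G : MGraph V E) (u v : V) : MGraph V (Option E) where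
  inc := fun e? => e?.elim s(u, v) G.inc

end MGraph

/-- triangle blocker.  If `G` is (2,l)-sparse with a triangle
`v₁,e₁,v₂,e₂,v₃,e₃,v₁` (v₁ ≠ v₂, e₁ ≠ e₂), and the contraction
`G_{T,e₁} = (G/e₁) - e₂` (identify v₂ with v₁, delete e₁ and e₂) is not
(2,l)-sparse, then there is a subgraph `H` of `G` containing `e₁`, not
containing `v₃`, with γ(H) = l. -/
theorem triangle_contraction_blocker {V E : Type} [DecidableEq V] [DecidableEq E]
    [Fintype V] [Fintype E] (G : MGraph V E) (l : ℤ) (hl : l ≤ 2)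
    (v₁ v₂ v₃ : V) (e₁ e₂ e₃ : E) (hv : v₁ ≠ v₂) (he : e₁ ≠ e₂)
    (i1 : G.inc e₁ = s(v₁, v₂)) (i2 : G.inc e₂ = s(v₂, v₃)) (i3 : G.inc e₃ = s(v₃, v₁))
    (hsp : MGraph.Sparse l (MGraph.top G))
    (hns : ¬ MGraph.Sparse l (MGraph.top (G.contractDel v₁ v₂ hv e₁ e₂))) :
    ∃ H : G.Sub, e₁ ∈ H.edges ∧ v₃ ∉ H.verts ∧ H.gamma = l := by
  classical
  rw [MGraph.Sparse] at hns
  push_neg at hns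
  obtain ⟨K, -, hKne, hKg⟩ := hns
  set W : Finset V := K.verts.image Subtype.val with hW
  set F : Finset E := K.edges.image Subtype.val with hF
  have hmem : ∀ e ∈ K.edges, ∀ v ∈ G.inc e.1,
      (v = v₂ ∧ (⟨v₁, hv⟩ : {x : V // x ≠ v₂}) ∈ K.verts) ∨ v ∈ W := by
    intro e heK v hvmem
    have hm : (if h : v = v₂ then (⟨v₁, hv⟩ : {x : V // x ≠ v₂}) else ⟨v, h⟩) ∈
        (G.contractDel v₁ v₂ hv e₁ e₂).inc e := by
      show _ ∈ (G.inc e.1).map _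
      exact Sym2.mem_map.2 ⟨v, hvmem, rfl⟩
    have hK := K.compat e heK _ hm
    by_cases h : v = v₂
    · exact Or.inl ⟨h, by simpa [h] using hK⟩
    · exact Or.inr (Finset.mem_image.2 ⟨⟨v, h⟩, by simpa [h] using hK, rfl⟩)
  have hv1 : (⟨v₁, hv⟩ : {x : V // x ≠ v₂}) ∈ K.verts := by
    by_contra hv1
    have compat0 : ∀ e ∈ F, ∀ v ∈ G.inc e, v ∈ W := by
      intro e heF v hvm
      obtain ⟨e', he', rfl⟩ := Finset.mem_image.1 heF
      rcases hmem e' he' v hvm with ⟨_, h⟩ | h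
      · exact absurd h hv1
      · exact h
    have hle := hsp ⟨W, F, compat0⟩ ⟨Finset.subset_univ _, Finset.subset_univ _⟩
      (hKne.image _)
    have hg : (MGraph.Sub.gamma (G := G) ⟨W, F, compat0⟩) = K.gamma := by
      simp only [MGraph.Sub.gamma, hW, hF]
      rw [Finset.card_image_of_injective _ Subtype.val_injective,
          Finset.card_image_of_injective _ Subtype.val_injective]
    rw [hg] at hle
    omega
  have hv1W : v₁ ∈ W := Finset.mem_image.2 ⟨_, hv1, rfl⟩
  have hv2W : v₂ ∉ W := by
    intro h; obtain ⟨u, -, hu⟩ := Finset.mem_image.1 h; exact u.2 hu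
  have he1F : e₁ ∉ F := by
    intro h; obtain ⟨u, -, hu⟩ := Finset.mem_image.1 h; exact u.2.1 hu
  have he2F : e₂ ∉ F := by
    intro h; obtain ⟨u, -, hu⟩ := Finset.mem_image.1 h; exact u.2.2 hu
  have compat1 : ∀ e ∈ insert e₁ F, ∀ v ∈ G.inc e, v ∈ insert v₂ W := by
    intro e heF v hvm
    rcases Finset.mem_insert.1 heF with rfl | heF
    · rw [i1] at hvm
      rcases Sym2.mem_iff.1 hvm with rfl | rfl
      · exact Finset.mem_insert_of_mem hv1W
      · exact Finset.mem_insert_self _ _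
    · obtain ⟨e', he', rfl⟩ := Finset.mem_image.1 heF
      rcases hmem e' he' v hvm with ⟨rfl, -⟩ | h
      · exact Finset.mem_insert_self _ _
      · exact Finset.mem_insert_of_mem h
  refine ⟨⟨insert v₂ W, insert e₁ F, compat1⟩, Finset.mem_insert_self _ _, ?_, ?_⟩
  all_goals
    have hHg : (MGraph.Sub.gamma (G := G) ⟨insert v₂ W, insert e₁ F, compat1⟩)
        = K.gamma + 1 := by
      simp only [MGraph.Sub.gamma, hW, hF]
      rw [Finset.card_insert_of_notMem hv2W, Finset.card_insert_of_notMem he1F,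
          Finset.card_image_of_injective _ Subtype.val_injective,
          Finset.card_image_of_injective _ Subtype.val_injective]
      push_cast
      ring
  · -- v₃ ∉ verts
    intro hv3
    have compat2 : ∀ e ∈ insert e₂ (insert e₁ F), ∀ v ∈ G.inc e, v ∈ insert v₂ W := by
      intro e heF v hvm
      rcases Finset.mem_insert.1 heF with rfl | heF
      · rw [i2] at hvm
        rcases Sym2.mem_iff.1 hvm with rfl | rfl
        · exact Finset.mem_insert_self _ _
        · exact hv3
      · exact compat1 e heF v hvm
    have he2' : e₂ ∉ insert e₁ F := by
      simp only [Finset.mem_insert]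
      rintro (h | h)
      · exact he h.symm
      · exact he2F h
    have hle := hsp ⟨insert v₂ W, insert e₂ (insert e₁ F), compat2⟩
      ⟨Finset.subset_univ _, Finset.subset_univ _⟩ ⟨v₂, Finset.mem_insert_self _ _⟩
    have hg2 : (MGraph.Sub.gamma (G := G)
        ⟨insert v₂ W, insert e₂ (insert e₁ F), compat2⟩) = K.gamma := by
      simp only [MGraph.Sub.gamma] at hHg ⊢
      rw [Finset.card_insert_of_notMem he2']
      push_cast at hHg ⊢
      omega
    rw [hg2] at hle
    omega
  · -- gamma = l
    have hle := hsp ⟨insert v₂ W, insert e₁ F, compat1⟩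
      ⟨Finset.subset_univ _, Finset.subset_univ _⟩ ⟨v₂, Finset.mem_insert_self _ _⟩
    omega
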